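/- arXiv:2312.16615 — 8 statements merged into one kernel-verified Lean document; each statement's English description precedes it below -/
import Mathlib

section
/- For 0 ≤ a₁ < a₂ ≤ 1/2, the two-point distortion error V(a₁,a₂) = (1/2)[∫₀^{2(a₁+a₂)} ((x-a₁)²+3a₁²) dx + ∫_{2(a₁+a₂)}^{2} ((x-a₂)²+3a₂²) dx] equals 2a₁³ + 2a₂a₁² - 2a₂²a₁ - 2(a₂-1)²a₂ + 4/3, and its minimum value is 49/48, attained at a₁ = 1/8, a₂ = 3/8. -/
lemma integ (a b c : ℝ) : ∫ x in a..b, ((x - c)^2 + 3*c^2) =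
    ((b-c)^3/3 + 3*c^2*b) - ((a-c)^3/3 + 3*c^2*a) := by
  have h : (∫ x in a..b, ((x - c)^2 + 3*c^2)) = ∫ x in (a-c)..(b-c), (x^2 + 3*c^2) := by
    rw [← intervalIntegral.integral_comp_sub_right (fun x => x^2 + 3*c^2) c]
  rw [h, intervalIntegral.integral_add (by apply Continuous.intervalIntegrable; continuity)
    (by apply Continuous.intervalIntegrable; continuity),
    integral_pow, intervalIntegral.integral_const, smul_eq_mul]
  ring

/-- Two-point distortion error with both points on side OB. -/
theorem stmt2 :
    let V : ℝ → ℝ → ℝ := fun a₁ a₂ =>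
      (1/2) * ((∫ x in (0:ℝ)..(2*(a₁+a₂)), ((x - a₁)^2 + 3*a₁^2)) +
        ∫ x in (2*(a₁+a₂))..(2:ℝ), ((x - a₂)^2 + 3*a₂^2))
    (∀ a₁ a₂ : ℝ, 0 ≤ a₁ → a₁ < a₂ → a₂ ≤ 1/2 →
      V a₁ a₂ = 2*a₁^3 + 2*a₂*a₁^2 - 2*a₂^2*a₁ - 2*(a₂ - 1)^2*a₂ + 4/3) ∧
    V (1/8) (3/8) = 49/48 ∧
    (∀ a₁ a₂ : ℝ, 0 ≤ a₁ → a₁ < a₂ → a₂ ≤ 1/2 → 49/48 ≤ V a₁ a₂) := by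
  intro V
  have hV : ∀ a₁ a₂ : ℝ, V a₁ a₂ = (1/2) * ((((2*(a₁+a₂))-a₁)^3/3 + 3*a₁^2*(2*(a₁+a₂)) - (((0:ℝ)-a₁)^3/3 + 3*a₁^2*0)) + (((2:ℝ)-a₂)^3/3 + 3*a₂^2*2 - (((2*(a₁+a₂))-a₂)^3/3 + 3*a₂^2*(2*(a₁+a₂))))) := by
    intro a₁ a₂; simp only [V, integ]
  refine ⟨fun a₁ a₂ _ _ _ => by rw [hV]; ring, by rw [hV]; norm_num, ?_⟩
  intro a₁ a₂ h1 h2 h3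
  rw [hV]
  nlinarith [sq_nonneg (a₁ - 1/8), sq_nonneg (a₂ - 3/8), sq_nonneg (a₁ - a₂ + 1/4), sq_nonneg (a₁ + a₂ - 1/2), h1, h2.le, h3, sq_nonneg a₁, mul_nonneg h1 h1, mul_nonneg (mul_nonneg h1 h1) h1]
end

section
/- For a₁ ∈ [0,1/2] and b₁ ∈ [3/2,2], the two-point distortion error with one point on each side equals 2(-6a₁²(b₁²-3b₁+3) + a₁(6b₁²-21b₁+20) + 3a₁⁴ + 3b₁⁴ - 24b₁³ + 66b₁² - 74b₁ + 27)/(3(a₁-b₁)), and its minimum value is 13/48, attained at a₁ = 1/8, b₁ = 15/8. -/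
lemma integ_aux (l u a c : ℝ) :
    ∫ x in l..u, ((x - a)^2 + c) = ((u - a)^3 - (l - a)^3)/3 + c*(u - l) := by
  have h1 : IntervalIntegrable (fun x : ℝ => (x - a)^2) MeasureTheory.volume l u :=
    (by continuity : Continuous fun x : ℝ => (x - a)^2).intervalIntegrable l u
  have h2 : IntervalIntegrable (fun _ : ℝ => c) MeasureTheory.volume l u :=
    intervalIntegrable_const
  rw [intervalIntegral.integral_add h1 h2, intervalIntegral.integral_const,
    show (∫ x in l..u, (x - a)^2) = ∫ x in (l - a)..(u - a), x^2 from
      intervalIntegral.integral_comp_sub_right (fun x => x^2) a,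
    integral_pow]
  push_cast [smul_eq_mul]
  ring

/-- Two-point distortion error with one point on each slanted side. -/
theorem stmt3 :
    let V : ℝ → ℝ → ℝ := fun a₁ b₁ =>
      (1/2) * ((∫ x in (0:ℝ)..(2*(a₁^2 - b₁^2 + 3*b₁ - 3)/(a₁ - b₁)), ((x - a₁)^2 + 3*a₁^2)) +
        ∫ x in (2*(a₁^2 - b₁^2 + 3*b₁ - 3)/(a₁ - b₁))..(2:ℝ), ((x - b₁)^2 + 3*(b₁ - 2)^2))
    (∀ a₁ b₁ : ℝ, 0 ≤ a₁ → a₁ ≤ 1/2 → 3/2 ≤ b₁ → b₁ ≤ 2 →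
      V a₁ b₁ = 2*(-6*a₁^2*(b₁^2 - 3*b₁ + 3) + a₁*(6*b₁^2 - 21*b₁ + 20) + 3*a₁^4 + 3*b₁^4
        - 24*b₁^3 + 66*b₁^2 - 74*b₁ + 27)/(3*(a₁ - b₁))) ∧
    V (1/8) (15/8) = 13/48 ∧
    (∀ a₁ b₁ : ℝ, 0 ≤ a₁ → a₁ ≤ 1/2 → 3/2 ≤ b₁ → b₁ ≤ 2 → 13/48 ≤ V a₁ b₁) := by
  intro V
  have key : ∀ a₁ b₁ : ℝ, 0 ≤ a₁ → a₁ ≤ 1/2 → 3/2 ≤ b₁ → b₁ ≤ 2 →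
      V a₁ b₁ = 2*(-6*a₁^2*(b₁^2 - 3*b₁ + 3) + a₁*(6*b₁^2 - 21*b₁ + 20) + 3*a₁^4 + 3*b₁^4
        - 24*b₁^3 + 66*b₁^2 - 74*b₁ + 27)/(3*(a₁ - b₁)) := by
    intro a b ha ha' hb hb'
    have hne : a - b ≠ 0 := by nlinarith
    show (1/2) * (_ + _) = _
    rw [integ_aux, integ_aux]
    field_simp
    ring
  refine ⟨key, ?_, ?_⟩
  · rw [key (1/8) (15/8) (by norm_num) (by norm_num) (by norm_num) (by norm_num)]
    norm_num
  · intro a b ha ha' hb hb'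
    rw [key a b ha ha' hb hb']
    set P : ℝ := -6*a^2*(b^2 - 3*b + 3) + a*(6*b^2 - 21*b + 20) + 3*a^4 + 3*b^4
        - 24*b^3 + 66*b^2 - 74*b + 27 with hP
    have hd : 3*(a - b) < 0 := by nlinarith
    rw [le_div_iff_of_neg hd]
    have hs0 : (0:ℝ) ≤ a + 2 - b := by linarith
    have hs1 : a + 2 - b ≤ 1 := by linarith
    have hg : 0 ≤ 3 + 2*(a + 2 - b) - 4*(a + 2 - b)^2 := by nlinarith [sq_nonneg (a + 2 - b)]
    have h1 : 0 ≤ 3*(4*(a + 2 - b) - 1)^2*(2 - (a + 2 - b)) := by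
      have : (0:ℝ) ≤ 2 - (a + 2 - b) := by linarith
      positivity
    have h2 : 0 ≤ 24*(a + b - 2)^2*(3 + 2*(a + 2 - b) - 4*(a + 2 - b)^2) := by positivity
    nlinarith [h1, h2]
end

section
/- The optimal set of two points for the uniform distribution on [0,2] with constraint S = S₁ ∪ S₂ (the two slanted sides of the equilateral triangle O(0,0), A(2,0), B(1,√3)) is {(1/8, √3/8), (15/8, √3/8)}, with second constrained quantization error V₂ = 13/48. -/
open scoped Classical

/-- Distortion error of a finite set w.r.t. the uniform distribution on the base `[0,2]`,
using the squared Euclidean distance `rho((x,0),(a,b)) = (x-a)^2 + b^2`. -/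
noncomputable def distortion (α : Finset (ℝ × ℝ)) : ℝ :=
  (1/2) * ∫ x in (0:ℝ)..2, sInf ((fun p : ℝ × ℝ => (x - p.1)^2 + p.2^2) '' (α : Set (ℝ × ℝ)))

/-- The side `OB` of the equilateral triangle `O(0,0)`, `A(2,0)`, `B(1,√3)`. -/
def S1 : Set (ℝ × ℝ) := {p | ∃ x : ℝ, 0 ≤ x ∧ x ≤ 1 ∧ p = (x, Real.sqrt 3 * x)}

/-- The side `AB` of the equilateral triangle. -/
def S2 : Set (ℝ × ℝ) := {p | ∃ x : ℝ, 1 ≤ x ∧ x ≤ 2 ∧ p = (x, -(Real.sqrt 3) * (x - 2))}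

/-- The `n`-th constrained quantization error with constraint `S1 ∪ S2`. -/
noncomputable def V (n : ℕ) : ℝ :=
  sInf {v | ∃ α : Finset (ℝ × ℝ), ↑α ⊆ S1 ∪ S2 ∧ 1 ≤ α.card ∧ α.card ≤ n ∧ v = distortion α}

open intervalIntegral MeasureTheory Set

lemma Iint (a b t s : ℝ) : ∫ x in a..b, ((x-t)^2 + s) = ((b-t)^3 - (a-t)^3)/3 + s*(b-a) := by
  have h1 : IntervalIntegrable (fun x : ℝ => (x-t)^2) volume a b :=
    (by continuity : Continuous fun x : ℝ => (x-t)^2).intervalIntegrable _ _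
  have h2 : IntervalIntegrable (fun _ : ℝ => s) volume a b := intervalIntegrable_const
  rw [intervalIntegral.integral_add h1 h2, intervalIntegral.integral_const,
    intervalIntegral.integral_comp_sub_right (fun x => x^2) t, integral_pow, smul_eq_mul]
  push_cast
  ring

lemma Fineq (t u c : ℝ) (h0 : 0 ≤ c) (h2 : c ≤ 2) :
    13/24 ≤ (((c-t)^3 - (0-t)^3)/3 + 3*t^2*(c-0)) + (((2-(2-u))^3 - (c-(2-u))^3)/3 + 3*u^2*(2-c)) := by
  nlinarith [mul_nonneg h0 (sq_nonneg (2*t - c/4)),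
    mul_nonneg (by linarith : (0:ℝ) ≤ 2 - c) (sq_nonneg (2*u - (2-c)/4)),
    sq_nonneg (c - 1)]

lemma key (t u : ℝ) (ht1 : t ≤ 1) (hu1 : u ≤ 1) :
    13/24 ≤ ∫ x in (0:ℝ)..2, min ((x-t)^2+3*t^2) ((x-(2-u))^2+3*u^2) := by
  set f : ℝ → ℝ := fun x => (x-t)^2+3*t^2 with hf
  set g : ℝ → ℝ := fun x => (x-(2-u))^2+3*u^2 with hg
  set D : ℝ := 4 - 2*t - 2*u with hD
  set N : ℝ := (2-u)^2 + 3*u^2 - 4*t^2 with hN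
  have hdiff : ∀ x, f x - g x = D*x - N := by intro x; simp only [hf, hg, hD, hN]; ring
  have hDpos : 0 ≤ D := by simp only [hD]; linarith
  have hmain : ∃ c, 0 ≤ c ∧ c ≤ 2 ∧
      (∫ x in (0:ℝ)..c, min (f x) (g x)) = ∫ x in (0:ℝ)..c, f x ∧
      (∫ x in c..2, min (f x) (g x)) = ∫ x in c..2, g x := by
    by_cases hA : f 2 ≤ g 2
    · refine ⟨2, by norm_num, le_refl _, ?_, by simp⟩
      apply intervalIntegral.integral_congr
      intro x hx
      rw [Set.uIcc_of_le (by norm_num : (0:ℝ) ≤ 2)] at hx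
      have h1 : f x - g x ≤ 0 := by
        have := hdiff x; have := hdiff 2
        nlinarith [mul_nonneg hDpos (by linarith [hx.2] : (0:ℝ) ≤ 2 - x)]
      simp [min_eq_left (by linarith : f x ≤ g x)]
    · by_cases hB : g 0 ≤ f 0
      · refine ⟨0, le_refl _, by norm_num, by simp, ?_⟩
        apply intervalIntegral.integral_congr
        intro x hx
        rw [Set.uIcc_of_le (by norm_num : (0:ℝ) ≤ 2)] at hx
        have h1 : g x ≤ f x := by
          have := hdiff x; have := hdiff 0
          nlinarith [mul_nonneg hDpos hx.1]
        simp [min_eq_right h1]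
      · push_neg at hA hB
        have h0 : f 0 - g 0 < 0 := by linarith
        have h2 : 0 < f 2 - g 2 := by linarith
        rw [hdiff 0] at h0; rw [hdiff 2] at h2
        have hNpos : 0 < N := by linarith
        have hDpos' : 0 < D := by nlinarith
        refine ⟨N/D, le_of_lt (div_pos hNpos hDpos'), ?_, ?_, ?_⟩
        · rw [div_le_iff₀ hDpos']; linarith
        · apply intervalIntegral.integral_congr
          intro x hx
          rw [Set.uIcc_of_le (le_of_lt (div_pos hNpos hDpos'))] at hx
          have : f x - g x ≤ 0 := by
            rw [hdiff x]
            have := (le_div_iff₀ hDpos').mp hx.2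
            nlinarith
          simp [min_eq_left (by linarith : f x ≤ g x)]
        · apply intervalIntegral.integral_congr
          intro x hx
          rw [Set.uIcc_of_le (by rw [div_le_iff₀ hDpos']; linarith : N/D ≤ 2)] at hx
          have : 0 ≤ f x - g x := by
            rw [hdiff x]
            have := (div_le_iff₀ hDpos').mp hx.1
            nlinarith
          simp [min_eq_right (by linarith : g x ≤ f x)]
  obtain ⟨c, hc0, hc2, e1, e2⟩ := hmain
  have hmin : Continuous fun x => min (f x) (g x) := by
    apply Continuous.min <;> continuity
  have hadj : (∫ x in (0:ℝ)..c, min (f x) (g x)) + (∫ x in c..2, min (f x) (g x))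
      = ∫ x in (0:ℝ)..2, min (f x) (g x) :=
    intervalIntegral.integral_add_adjacent_intervals (hmin.intervalIntegrable _ _)
      (hmin.intervalIntegrable _ _)
  rw [← hadj, e1, e2, hf, hg]
  rw [Iint 0 c t (3*t^2), Iint c 2 (2-u) (3*u^2)]
  have := Fineq t u c hc0 hc2
  linarith

lemma mem_form (p : ℝ × ℝ) (hp : p ∈ S1 ∪ S2) :
    (∃ t, 0 ≤ t ∧ t ≤ 1 ∧ ∀ x : ℝ, (x - p.1)^2 + p.2^2 = (x-t)^2 + 3*t^2) ∨
    (∃ u, 0 ≤ u ∧ u ≤ 1 ∧ ∀ x : ℝ, (x - p.1)^2 + p.2^2 = (x-(2-u))^2 + 3*u^2) := by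
  have h3 : (Real.sqrt 3)^2 = 3 := Real.sq_sqrt (by norm_num)
  rcases hp with ⟨a, ha0, ha1, rfl⟩ | ⟨a, ha0, ha1, rfl⟩
  · left
    refine ⟨a, ha0, ha1, fun x => ?_⟩
    simp only
    nlinarith [h3, sq_nonneg (Real.sqrt 3 * a)]
  · right
    refine ⟨2 - a, by linarith, by linarith, fun x => ?_⟩
    simp only
    nlinarith [h3]

lemma lb_min1 (t t' x : ℝ) :
    (3/4)*x^2 ≤ min ((x-t)^2+3*t^2) ((x-t')^2+3*t'^2) := by
  apply le_min <;> nlinarith [sq_nonneg (x - 4*t), sq_nonneg (x - 4*t')]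

lemma lb_min2 (u u' x : ℝ) :
    (3/4)*(x-2)^2 ≤ min ((x-(2-u))^2+3*u^2) ((x-(2-u'))^2+3*u'^2) := by
  apply le_min <;> nlinarith [sq_nonneg (x - 2 + 4*u), sq_nonneg (x - 2 + 4*u')]

lemma q1 : ∫ x in (0:ℝ)..2, (3/4)*x^2 = 2 := by
  rw [intervalIntegral.integral_const_mul, integral_pow]; norm_num

lemma q2 : ∫ x in (0:ℝ)..2, (3/4)*(x-2)^2 = 2 := by
  rw [intervalIntegral.integral_const_mul,
    intervalIntegral.integral_comp_sub_right (fun x => x^2) 2, integral_pow]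
  norm_num

lemma single_bound (t : ℝ) : 13/24 ≤ ∫ x in (0:ℝ)..2, ((x-t)^2+3*t^2) := by
  rw [Iint 0 2 t (3*t^2)]
  nlinarith [sq_nonneg (4*t - 1)]

lemma single_bound2 (u : ℝ) : 13/24 ≤ ∫ x in (0:ℝ)..2, ((x-(2-u))^2+3*u^2) := by
  rw [Iint 0 2 (2-u) (3*u^2)]
  nlinarith [sq_nonneg (4*u - 1)]

lemma lb (α : Finset (ℝ × ℝ)) (hsub : ↑α ⊆ S1 ∪ S2) (h1 : 1 ≤ α.card) (h2 : α.card ≤ 2) :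
    13/48 ≤ distortion α := by
  have hcard : α.card = 1 ∨ α.card = 2 := by omega
  rcases hcard with h | h
  · obtain ⟨p, rfl⟩ := Finset.card_eq_one.mp h
    have hp : p ∈ S1 ∪ S2 := hsub (by simp)
    unfold distortion
    simp only [Finset.coe_singleton, Set.image_singleton, csInf_singleton]
    rcases mem_form p hp with ⟨t, _, _, hfp⟩ | ⟨u, _, _, hfp⟩
    · simp only [hfp]
      have := single_bound t
      linarith
    · simp only [hfp]
      have := single_bound2 u
      linarith
  · obtain ⟨p, q, hpq, rfl⟩ := Finset.card_eq_two.mp h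
    have hp : p ∈ S1 ∪ S2 := hsub (by simp)
    have hq : q ∈ S1 ∪ S2 := hsub (by simp)
    unfold distortion
    simp only [Finset.coe_insert, Finset.coe_singleton, Set.image_insert_eq,
      Set.image_singleton, csInf_pair]
    rcases mem_form p hp with ⟨t, ht0, ht1, hfp⟩ | ⟨u, hu0, hu1, hfp⟩ <;>
      rcases mem_form q hq with ⟨t', ht0', ht1', hfq⟩ | ⟨u', hu0', hu1', hfq⟩ <;>
      simp only [hfp, hfq]
    · -- both on S1
      have hmono : (∫ x in (0:ℝ)..2, (3/4)*x^2)
          ≤ ∫ x in (0:ℝ)..2, min ((x-t)^2+3*t^2) ((x-t')^2+3*t'^2) := by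
        apply intervalIntegral.integral_mono_on (by norm_num)
          ((by continuity : Continuous fun x : ℝ => (3/4)*x^2).intervalIntegrable _ _)
          (((by continuity : Continuous fun x : ℝ => (x-t)^2+3*t^2).min
            (by continuity : Continuous fun x : ℝ => (x-t')^2+3*t'^2)).intervalIntegrable _ _)
        intro x _
        exact lb_min1 t t' x
      rw [q1] at hmono
      linarith
    · have := key t u' ht1 hu1'
      linarith
    · have heq : (∫ x in (0:ℝ)..2, min ((x-(2-u))^2+3*u^2) ((x-t')^2+3*t'^2))
          = ∫ x in (0:ℝ)..2, min ((x-t')^2+3*t'^2) ((x-(2-u))^2+3*u^2) :=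
        intervalIntegral.integral_congr (fun x _ => min_comm _ _)
      rw [heq]
      have := key t' u ht1' hu1
      linarith
    · -- both on S2
      have hmono : (∫ x in (0:ℝ)..2, (3/4)*(x-2)^2)
          ≤ ∫ x in (0:ℝ)..2, min ((x-(2-u))^2+3*u^2) ((x-(2-u'))^2+3*u'^2) := by
        apply intervalIntegral.integral_mono_on (by norm_num)
          ((by continuity : Continuous fun x : ℝ => (3/4)*(x-2)^2).intervalIntegrable _ _)
          (((by continuity : Continuous fun x : ℝ => (x-(2-u))^2+3*u^2).min
            (by continuity : Continuous fun x : ℝ => (x-(2-u'))^2+3*u'^2)).intervalIntegrable _ _)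
        intro x _
        exact lb_min2 u u' x
      rw [q2] at hmono
      linarith

lemma exact_val :
    distortion {((1/8 : ℝ), Real.sqrt 3 / 8), ((15/8 : ℝ), Real.sqrt 3 / 8)} = 13/48 := by
  have hs : (Real.sqrt 3 / 8)^2 = 3/64 := by
    rw [div_pow, Real.sq_sqrt (by norm_num : (0:ℝ) ≤ 3)]; norm_num
  unfold distortion
  simp only [Finset.coe_insert, Finset.coe_singleton, Set.image_insert_eq,
    Set.image_singleton, csInf_pair]
  have e1 : (∫ x in (0:ℝ)..1, min ((x - 1/8)^2 + (Real.sqrt 3 / 8)^2)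
        ((x - 15/8)^2 + (Real.sqrt 3 / 8)^2))
      = ∫ x in (0:ℝ)..1, ((x - 1/8)^2 + 3/64) := by
    apply intervalIntegral.integral_congr
    intro x hx
    rw [Set.uIcc_of_le (by norm_num : (0:ℝ) ≤ 1)] at hx
    rw [hs]
    exact min_eq_left (by nlinarith [hx.2])
  have e2 : (∫ x in (1:ℝ)..2, min ((x - 1/8)^2 + (Real.sqrt 3 / 8)^2)
        ((x - 15/8)^2 + (Real.sqrt 3 / 8)^2))
      = ∫ x in (1:ℝ)..2, ((x - 15/8)^2 + 3/64) := by
    apply intervalIntegral.integral_congr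
    intro x hx
    rw [Set.uIcc_of_le (by norm_num : (1:ℝ) ≤ 2)] at hx
    rw [hs]
    exact min_eq_right (by nlinarith [hx.1])
  have hmin : Continuous fun x : ℝ => min ((x - 1/8)^2 + (Real.sqrt 3 / 8)^2)
      ((x - 15/8)^2 + (Real.sqrt 3 / 8)^2) := by
    apply Continuous.min <;> continuity
  have hadj : (∫ x in (0:ℝ)..1, min ((x - 1/8)^2 + (Real.sqrt 3 / 8)^2)
        ((x - 15/8)^2 + (Real.sqrt 3 / 8)^2))
      + (∫ x in (1:ℝ)..2, min ((x - 1/8)^2 + (Real.sqrt 3 / 8)^2)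
        ((x - 15/8)^2 + (Real.sqrt 3 / 8)^2))
      = ∫ x in (0:ℝ)..2, min ((x - 1/8)^2 + (Real.sqrt 3 / 8)^2)
        ((x - 15/8)^2 + (Real.sqrt 3 / 8)^2) :=
    intervalIntegral.integral_add_adjacent_intervals (hmin.intervalIntegrable _ _)
      (hmin.intervalIntegrable _ _)
  rw [← hadj, e1, e2, Iint 0 1 (1/8) (3/64), Iint 1 2 (15/8) (3/64)]
  norm_num

/-- The optimal set of two points is {(1/8, √3/8), (15/8, √3/8)} with V₂ = 13/48. -/
theorem stmt4 :
    V 2 = 13/48 ∧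
    distortion {((1/8 : ℝ), Real.sqrt 3 / 8), ((15/8 : ℝ), Real.sqrt 3 / 8)} = 13/48 := by
  refine ⟨?_, exact_val⟩
  have hne : ((1/8 : ℝ), Real.sqrt 3 / 8) ≠ ((15/8 : ℝ), Real.sqrt 3 / 8) := by
    simp only [ne_eq, Prod.mk.injEq, not_and]
    intro h
    norm_num at h
  have hmem : (13/48 : ℝ) ∈ {v | ∃ α : Finset (ℝ × ℝ),
      ↑α ⊆ S1 ∪ S2 ∧ 1 ≤ α.card ∧ α.card ≤ 2 ∧ v = distortion α} := by
    refine ⟨{((1/8 : ℝ), Real.sqrt 3 / 8), ((15/8 : ℝ), Real.sqrt 3 / 8)}, ?_, ?_, ?_, exact_val.symm⟩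
    · intro p hp
      simp only [Finset.coe_insert, Finset.coe_singleton, Set.mem_insert_iff,
        Set.mem_singleton_iff] at hp
      rcases hp with rfl | rfl
      · left
        exact ⟨1/8, by norm_num, by norm_num, by norm_num [Prod.ext_iff]; ring⟩
      · right
        exact ⟨15/8, by norm_num, by norm_num, by norm_num [Prod.ext_iff]; ring⟩
    · rw [Finset.card_pair hne]; norm_num
    · rw [Finset.card_pair hne]
  have hlb : ∀ v ∈ {v | ∃ α : Finset (ℝ × ℝ),
      ↑α ⊆ S1 ∪ S2 ∧ 1 ≤ α.card ∧ α.card ≤ 2 ∧ v = distortion α}, 13/48 ≤ v := by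
    rintro v ⟨α, hsub, h1, h2, rfl⟩
    exact lb α hsub h1 h2
  unfold V
  exact le_antisymm (csInf_le ⟨13/48, hlb⟩ hmem) (le_csInf ⟨13/48, hmem⟩ hlb)
end

section
/- For 0 ≤ a₁ < a₂ < a₃ ≤ 1/2, the three-point distortion error with all points on side OB equals 2a₁³ + 2a₂a₁² - 2a₂²a₁ - 2a₃³ - 2(a₂-2)a₃² + 2(a₂²-1)a₃ + 4/3, and its minimum value is 109/108, attained at a₁ = 1/12, a₂ = 1/4, a₃ = 5/12. -/
lemma int_helper5 (a b c : ℝ) :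
    (∫ x in a..b, ((x - c)^2 + 3*c^2)) =
      (b^3/3 - c*b^2 + 4*c^2*b) - (a^3/3 - c*a^2 + 4*c^2*a) := by
  have hd : ∀ x : ℝ, HasDerivAt (fun x : ℝ => x^3/3 - c*x^2 + 4*c^2*x)
      ((x - c)^2 + 3*c^2) x := by
    intro x
    have h := (((hasDerivAt_pow 3 x).div_const 3).sub ((hasDerivAt_pow 2 x).const_mul c)).add
      ((hasDerivAt_id x).const_mul (4*c^2))
    refine h.congr_deriv ?_
    norm_num
    ring
  rw [intervalIntegral.integral_eq_sub_of_hasDerivAt (fun x _ => hd x)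
    (by apply Continuous.intervalIntegrable; continuity)]

lemma min_helper5 (a₁ a₂ a₃ : ℝ) (h0 : 0 ≤ a₁) (h1 : a₁ < a₂) (h2 : a₂ < a₃)
    (h3 : a₃ ≤ 1/2) :
    109/108 ≤ 2*a₁^3 + 2*a₂*a₁^2 - 2*a₂^2*a₁ - 2*a₃^3 - 2*(a₂ - 2)*a₃^2
        + 2*(a₂^2 - 1)*a₃ + 4/3 := by
  have h2' : (0:ℝ) ≤ a₂ := le_of_lt (lt_of_le_of_lt h0 h1)
  have h3' : (0:ℝ) ≤ a₃ := le_of_lt (lt_of_le_of_lt h2' h2)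
  have t1 : 0 ≤ 2*(a₁ - a₂/3)^2*(a₁ + 5*a₂/3) :=
    mul_nonneg (by positivity) (by linarith)
  have t2 : 0 ≤ (10/27)*(a₂ - 3*a₃/5)^2*(21*a₃/5 - a₂) :=
    mul_nonneg (by positivity) (by linarith)
  have t3 : 0 ≤ (64/25)*(a₃ - 5/12)^2*(35/48 - a₃) :=
    mul_nonneg (by positivity) (by linarith)
  nlinarith [t1, t2, t3]

/-- Three-point distortion error with all points on side OB. -/
theorem stmt5 :
    let V : ℝ → ℝ → ℝ → ℝ := fun a₁ a₂ a₃ =>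
      (1/2) * ((∫ x in (0:ℝ)..(2*(a₁+a₂)), ((x - a₁)^2 + 3*a₁^2)) +
        (∫ x in (2*(a₁+a₂))..(2*(a₂+a₃)), ((x - a₂)^2 + 3*a₂^2)) +
        ∫ x in (2*(a₂+a₃))..(2:ℝ), ((x - a₃)^2 + 3*a₃^2))
    (∀ a₁ a₂ a₃ : ℝ, 0 ≤ a₁ → a₁ < a₂ → a₂ < a₃ → a₃ ≤ 1/2 →
      V a₁ a₂ a₃ = 2*a₁^3 + 2*a₂*a₁^2 - 2*a₂^2*a₁ - 2*a₃^3 - 2*(a₂ - 2)*a₃^2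
        + 2*(a₂^2 - 1)*a₃ + 4/3) ∧
    V (1/12) (1/4) (5/12) = 109/108 ∧
    (∀ a₁ a₂ a₃ : ℝ, 0 ≤ a₁ → a₁ < a₂ → a₂ < a₃ → a₃ ≤ 1/2 → 109/108 ≤ V a₁ a₂ a₃) := by
  intro V
  have hV : ∀ a₁ a₂ a₃ : ℝ, V a₁ a₂ a₃ =
      2*a₁^3 + 2*a₂*a₁^2 - 2*a₂^2*a₁ - 2*a₃^3 - 2*(a₂ - 2)*a₃^2
        + 2*(a₂^2 - 1)*a₃ + 4/3 := by
    intro a₁ a₂ a₃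
    show (1/2) * _ = _
    rw [int_helper5, int_helper5, int_helper5]
    ring
  refine ⟨fun a₁ a₂ a₃ _ _ _ _ => hV a₁ a₂ a₃, ?_, ?_⟩
  · rw [hV]; norm_num
  · intro a₁ a₂ a₃ h0 h1 h2 h3
    rw [hV]
    exact min_helper5 a₁ a₂ a₃ h0 h1 h2 h3
end

section
/- The four-point configuration with a₁ = 1/16, a₂ = 3/16 on side OB and b₁ = 31/16, b₂ = 29/16 on side AB achieves distortion error 49/192, and this is the optimal constrained quantization error V₄ for the uniform distribution on [0,2] with constraint S₁ ∪ S₂. -/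
open scoped Classical

noncomputable section
set_option maxHeartbeats 1000000

def cpt (p : ℝ × ℝ) : ℝ := if p.1 ≤ 1 then 4*p.1 else 4*p.1 - 6


def M4 (a b c d : ℝ) : ℝ := min (min a b) (min c d)

lemma integ_poly (A c k u v : ℝ) :
    ∫ x in u..v, (A*(x-c)^2 + k) = A*((v-c)^3 - (u-c)^3)/3 + k*(v-u) := by
  have h : ∀ x : ℝ, HasDerivAt (fun y => A*(y-c)^3/3 + k*y) (A*(x-c)^2 + k) x := by
    intro x
    have h1 : HasDerivAt (fun y : ℝ => (y-c)) 1 x := (hasDerivAt_id x).sub_const c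
    have h3 := ((h1.pow 3).const_mul A).div_const 3
    have h4 := (hasDerivAt_id x).const_mul k
    refine (h3.add h4).congr_deriv ?_
    ring
  rw [intervalIntegral.integral_eq_sub_of_hasDerivAt (fun x _ => h x)
    (Continuous.intervalIntegrable (by continuity) u v)]
  ring

lemma contM4 {f1 f2 f3 f4 : ℝ → ℝ} (h1 : Continuous f1) (h2 : Continuous f2)
    (h3 : Continuous f3) (h4 : Continuous f4) :
    Continuous fun x => M4 (f1 x) (f2 x) (f3 x) (f4 x) :=
  (h1.min h2).min (h3.min h4)

lemma contq (c k : ℝ) : Continuous fun x : ℝ => (x - c)^2 + k := by continuity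

lemma sInf4 (p1 p2 p3 p4 : ℝ × ℝ) (x : ℝ) :
    sInf ((fun p : ℝ × ℝ => (x - p.1)^2 + p.2^2) '' ({p1,p2,p3,p4} : Set (ℝ × ℝ)))
      = M4 ((x-p1.1)^2+p1.2^2) ((x-p2.1)^2+p2.2^2) ((x-p3.1)^2+p3.2^2) ((x-p4.1)^2+p4.2^2) := by
  rw [Set.image_insert_eq, Set.image_insert_eq, Set.image_insert_eq, Set.image_singleton]
  rw [csInf_insert (Set.toFinite _).bddBelow (by simp),
      csInf_insert (Set.toFinite _).bddBelow (by simp),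
      csInf_insert (Set.toFinite _).bddBelow (by simp), csInf_singleton]
  simp [M4, min_comm, min_left_comm, min_assoc]

-- cell bound
lemma cellbound {u v cc : ℝ} (huv : u ≤ v) {g : ℝ → ℝ} (hg : Continuous g)
    (hle : ∀ x ∈ Set.Icc u v, (x - cc)^2 ≤ g x) :
    (v-u)^3/12 ≤ ∫ x in u..v, g x := by
  have h1 : (v-u)^3/12 ≤ ∫ x in u..v, (1*(x-cc)^2 + 0) := by
    rw [integ_poly]
    nlinarith [mul_nonneg (sub_nonneg.2 huv) (sq_nonneg (v+u-2*cc))]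
  refine h1.trans (intervalIntegral.integral_mono_on huv
    (Continuous.intervalIntegrable (by continuity) u v)
    (hg.intervalIntegrable u v) ?_)
  intro x hx
  simpa using hle x hx

lemma clamp_le {w : ℝ} (h : 0 < max 0 (min 2 w)) : max 0 (min 2 w) ≤ w := by
  rcases le_or_gt (min 2 w) 0 with h'|h'
  · rw [max_eq_left h'] at h; linarith
  · rw [max_eq_right h'.le]; exact min_le_right _ _

lemma le_clamp {w : ℝ} (h : max 0 (min 2 w) < 2) : w ≤ max 0 (min 2 w) := by
  rcases le_total w 2 with h'|h'
  · calc w = min 2 w := (min_eq_right h').symm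
      _ ≤ _ := le_max_right _ _
  · have : min 2 w = 2 := min_eq_left h'
    rw [this] at h
    have h2 := le_max_right (0:ℝ) (2:ℝ)
    linarith

lemma L1s (c1 c2 c3 c4 : ℝ) (h12 : c1 ≤ c2) (h23 : c2 ≤ c3) (h34 : c3 ≤ c4) :
    (1/24:ℝ) ≤ ∫ x in (0:ℝ)..2, M4 ((x-c1)^2) ((x-c2)^2) ((x-c3)^2) ((x-c4)^2) := by
  set g : ℝ → ℝ := fun x => M4 ((x-c1)^2) ((x-c2)^2) ((x-c3)^2) ((x-c4)^2) with hgdef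
  have hcont : Continuous g := contM4 (by continuity) (by continuity) (by continuity) (by continuity)
  set m1 := (c1+c2)/2 with hm1
  set m2 := (c2+c3)/2 with hm2
  set m3 := (c3+c4)/2 with hm3
  set t1 := max 0 (min 2 m1) with ht1
  set t2 := max 0 (min 2 m2) with ht2
  set t3 := max 0 (min 2 m3) with ht3
  have hm12 : m1 ≤ m2 := by rw [hm1, hm2]; linarith
  have hm23 : m2 ≤ m3 := by rw [hm2, hm3]; linarith
  have h0t1 : (0:ℝ) ≤ t1 := le_max_left _ _
  have ht12 : t1 ≤ t2 := max_le_max le_rfl (min_le_min le_rfl hm12)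
  have ht23 : t2 ≤ t3 := max_le_max le_rfl (min_le_min le_rfl hm23)
  have ht32 : t3 ≤ 2 := max_le (by norm_num) (min_le_left _ _)
  have e1 : (∫ x in (0:ℝ)..t1, g x) + ∫ x in t1..2, g x = ∫ x in (0:ℝ)..2, g x :=
    intervalIntegral.integral_add_adjacent_intervals (hcont.intervalIntegrable _ _)
      (hcont.intervalIntegrable _ _)
  have e2 : (∫ x in t1..t2, g x) + ∫ x in t2..2, g x = ∫ x in t1..2, g x :=
    intervalIntegral.integral_add_adjacent_intervals (hcont.intervalIntegrable _ _)
      (hcont.intervalIntegrable _ _)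
  have e3 : (∫ x in t2..t3, g x) + ∫ x in t3..2, g x = ∫ x in t2..2, g x :=
    intervalIntegral.integral_add_adjacent_intervals (hcont.intervalIntegrable _ _)
      (hcont.intervalIntegrable _ _)
  have cb1 : (t1-0)^3/12 ≤ ∫ x in (0:ℝ)..t1, g x := by
    rcases eq_or_lt_of_le h0t1 with he|hlt
    · rw [← he]; simp
    · refine cellbound (cc := c1) h0t1 hcont fun x hx => ?_
      have hxm : x ≤ m1 := le_trans hx.2 (clamp_le (ht1 ▸ hlt))
      have hr : 2*x ≤ c1 + c2 := by rw [hm1] at hxm; linarith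
      show (x-c1)^2 ≤ M4 ((x-c1)^2) ((x-c2)^2) ((x-c3)^2) ((x-c4)^2)
      rw [M4]
      refine le_min (le_min le_rfl ?_) (le_min ?_ ?_) <;> nlinarith [hr, h12, h23, h34]
  have cb2 : (t2-t1)^3/12 ≤ ∫ x in t1..t2, g x := by
    rcases eq_or_lt_of_le ht12 with he|hlt
    · rw [he]; simp
    · have h1lt2 : t1 < 2 := lt_of_lt_of_le hlt (le_trans ht23 ht32)
      have h2gt0 : (0:ℝ) < t2 := lt_of_le_of_lt h0t1 hlt
      have hxl : m1 ≤ t1 := le_clamp (ht1 ▸ h1lt2)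
      have hxr : t2 ≤ m2 := clamp_le (ht2 ▸ h2gt0)
      refine cellbound (cc := c2) ht12 hcont fun x hx => ?_
      have h1 : m1 ≤ x := le_trans hxl hx.1
      have h2 : x ≤ m2 := le_trans hx.2 hxr
      have hl : c1 + c2 ≤ 2*x := by rw [hm1] at h1; linarith
      have hr : 2*x ≤ c2 + c3 := by rw [hm2] at h2; linarith
      show (x-c2)^2 ≤ M4 ((x-c1)^2) ((x-c2)^2) ((x-c3)^2) ((x-c4)^2)
      rw [M4]
      refine le_min (le_min ?_ le_rfl) (le_min ?_ ?_) <;> nlinarith [hl, hr, h12, h23, h34]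
  have cb3 : (t3-t2)^3/12 ≤ ∫ x in t2..t3, g x := by
    rcases eq_or_lt_of_le ht23 with he|hlt
    · rw [he]; simp
    · have h2lt2 : t2 < 2 := lt_of_lt_of_le hlt ht32
      have h3gt0 : (0:ℝ) < t3 := lt_of_le_of_lt (le_trans h0t1 ht12) hlt
      have hxl : m2 ≤ t2 := le_clamp (ht2 ▸ h2lt2)
      have hxr : t3 ≤ m3 := clamp_le (ht3 ▸ h3gt0)
      refine cellbound (cc := c3) ht23 hcont fun x hx => ?_
      have h1 : m2 ≤ x := le_trans hxl hx.1
      have h2 : x ≤ m3 := le_trans hx.2 hxr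
      have hl : c2 + c3 ≤ 2*x := by rw [hm2] at h1; linarith
      have hr : 2*x ≤ c3 + c4 := by rw [hm3] at h2; linarith
      show (x-c3)^2 ≤ M4 ((x-c1)^2) ((x-c2)^2) ((x-c3)^2) ((x-c4)^2)
      rw [M4]
      refine le_min (le_min ?_ ?_) (le_min le_rfl ?_) <;> nlinarith [hl, hr, h12, h23, h34]
  have cb4 : (2-t3)^3/12 ≤ ∫ x in t3..2, g x := by
    rcases eq_or_lt_of_le ht32 with he|hlt
    · rw [he]; simp
    · have hxl : m3 ≤ t3 := le_clamp (ht3 ▸ hlt)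
      refine cellbound (cc := c4) ht32 hcont fun x hx => ?_
      have h1 : m3 ≤ x := le_trans hxl hx.1
      have hl : c3 + c4 ≤ 2*x := by rw [hm3] at h1; linarith
      show (x-c4)^2 ≤ M4 ((x-c1)^2) ((x-c2)^2) ((x-c3)^2) ((x-c4)^2)
      rw [M4]
      refine le_min (le_min ?_ ?_) (le_min ?_ le_rfl) <;> nlinarith [hl, h12, h23, h34]
  have cube : ∀ z : ℝ, 0 ≤ z → 3/4*z - 1/4 ≤ z^3 := by
    intro z hz
    nlinarith [mul_nonneg (sq_nonneg (z-1/2)) hz, sq_nonneg (z-1/2)]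
  have hsum : (1:ℝ)/2 ≤ (t1-0)^3 + (t2-t1)^3 + (t3-t2)^3 + (2-t3)^3 := by
    have := cube t1 h0t1
    have := cube (t2-t1) (by linarith)
    have := cube (t3-t2) (by linarith)
    have := cube (2-t3) (by linarith)
    linarith
  linarith

lemma congrM4 (c1 c2 c3 c4 d1 d2 d3 d4 : ℝ)
    (h : ∀ x : ℝ, M4 ((x-c1)^2) ((x-c2)^2) ((x-c3)^2) ((x-c4)^2)
      = M4 ((x-d1)^2) ((x-d2)^2) ((x-d3)^2) ((x-d4)^2)) :
    ∫ x in (0:ℝ)..2, M4 ((x-c1)^2) ((x-c2)^2) ((x-c3)^2) ((x-c4)^2)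
      = ∫ x in (0:ℝ)..2, M4 ((x-d1)^2) ((x-d2)^2) ((x-d3)^2) ((x-d4)^2) :=
  intervalIntegral.integral_congr (fun x _ => h x)

lemma L1mm (c1 c2 c3 c4 : ℝ) (h12 : c1 ≤ c2) (h34 : c3 ≤ c4) (h13 : c1 ≤ c3) :
    (1/24:ℝ) ≤ ∫ x in (0:ℝ)..2, M4 ((x-c1)^2) ((x-c2)^2) ((x-c3)^2) ((x-c4)^2) := by
  rcases le_total c2 c3 with h|h
  · exact L1s _ _ _ _ h12 h h34
  · rcases le_total c2 c4 with h'|h'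
    · rw [congrM4 c1 c2 c3 c4 c1 c3 c2 c4
        (fun x => by simp [M4, min_comm, min_left_comm, min_assoc])]
      exact L1s _ _ _ _ h13 h h'
    · rw [congrM4 c1 c2 c3 c4 c1 c3 c4 c2
        (fun x => by simp [M4, min_comm, min_left_comm, min_assoc])]
      exact L1s _ _ _ _ h13 h34 h'

lemma L1m (c1 c2 c3 c4 : ℝ) (h12 : c1 ≤ c2) (h34 : c3 ≤ c4) :
    (1/24:ℝ) ≤ ∫ x in (0:ℝ)..2, M4 ((x-c1)^2) ((x-c2)^2) ((x-c3)^2) ((x-c4)^2) := by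
  rcases le_total c1 c3 with h|h
  · exact L1mm _ _ _ _ h12 h34 h
  · rw [congrM4 c1 c2 c3 c4 c3 c4 c1 c2
      (fun x => by simp [M4, min_comm, min_left_comm, min_assoc])]
    exact L1mm _ _ _ _ h34 h12 h

lemma L1 (c1 c2 c3 c4 : ℝ) :
    (1/24:ℝ) ≤ ∫ x in (0:ℝ)..2, M4 ((x-c1)^2) ((x-c2)^2) ((x-c3)^2) ((x-c4)^2) := by
  rcases le_total c1 c2 with h|h <;> rcases le_total c3 c4 with h'|h'
  · exact L1m _ _ _ _ h h'
  · rw [congrM4 c1 c2 c3 c4 c1 c2 c4 c3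
      (fun x => by simp [M4, min_comm, min_left_comm, min_assoc])]
    exact L1m _ _ _ _ h h'
  · rw [congrM4 c1 c2 c3 c4 c2 c1 c3 c4
      (fun x => by simp [M4, min_comm, min_left_comm, min_assoc])]
    exact L1m _ _ _ _ h h'
  · rw [congrM4 c1 c2 c3 c4 c2 c1 c4 c3
      (fun x => by simp [M4, min_comm, min_left_comm, min_assoc])]
    exact L1m _ _ _ _ h h'

lemma point_bound {p : ℝ × ℝ} (hp : p ∈ S1 ∪ S2) {x : ℝ} (hx0 : 0 ≤ x) (hx2 : x ≤ 2) :
    3/4*(min x (2-x))^2 + (x - cpt p)^2/4 ≤ (x - p.1)^2 + p.2^2 := by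
  have h3 : Real.sqrt 3 ^ 2 = 3 := Real.sq_sqrt (by norm_num)
  have hm0 : 0 ≤ min x (2-x) := le_min hx0 (by linarith)
  have hmx : min x (2-x) ≤ x := min_le_left _ _
  have hm2 : min x (2-x) ≤ 2 - x := min_le_right _ _
  have hmsq1 : (min x (2-x))^2 ≤ x^2 :=
    pow_le_pow_left₀ hm0 hmx 2
  have hmsq2 : (min x (2-x))^2 ≤ (2-x)^2 :=
    pow_le_pow_left₀ hm0 hm2 2
  rcases hp with ⟨a, ha0, ha1, rfl⟩ | ⟨b, hb1, hb2, rfl⟩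
  · simp only [cpt, Prod.fst, Prod.snd]
    rw [if_pos ha1]
    have e : (Real.sqrt 3 * a)^2 = 3*a^2 := by rw [mul_pow, h3]
    nlinarith [e, hmsq1]
  · rcases le_or_gt b 1 with hb|hb
    · have hb' : b = 1 := le_antisymm hb hb1
      subst hb'
      simp only [cpt, Prod.fst, Prod.snd]
      rw [if_pos (le_refl (1:ℝ))]
      have e : (-Real.sqrt 3 * ((1:ℝ) - 2))^2 = 3 := by
        have : (-Real.sqrt 3 * ((1:ℝ) - 2))^2 = Real.sqrt 3 ^2 := by ring
        rw [this, h3]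
      nlinarith [e, hmsq1]
    · simp only [cpt, Prod.fst, Prod.snd]
      rw [if_neg (not_le.2 hb)]
      have e : (-Real.sqrt 3 * (b - 2))^2 = 3*(b-2)^2 := by
        have : (-Real.sqrt 3 * (b - 2))^2 = Real.sqrt 3 ^2 * (b-2)^2 := by ring
        rw [this, h3]
      nlinarith [e, hmsq2]

lemma cover (α : Finset (ℝ × ℝ)) (h1 : 1 ≤ α.card) (h4 : α.card ≤ 4) :
    ∃ p1 p2 p3 p4 : ℝ × ℝ, (↑α : Set (ℝ × ℝ)) = {p1, p2, p3, p4} := by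
  have hlen : α.toList.length ≤ 4 := by rw [Finset.length_toList]; exact h4
  rcases hL : α.toList with _ | ⟨a, _ | ⟨b, _ | ⟨c, _ | ⟨d, _ | ⟨e, t⟩⟩⟩⟩⟩
  · exfalso
    have : α.card = 0 := by rw [← Finset.length_toList, hL]; rfl
    omega
  · exact ⟨a,a,a,a, by ext p; simp [← Finset.mem_toList, hL]⟩
  · exact ⟨a,b,b,b, by ext p; simp [← Finset.mem_toList, hL]⟩
  · exact ⟨a,b,c,c, by ext p; simp [← Finset.mem_toList, hL]⟩
  · exact ⟨a,b,c,d, by ext p; simp [← Finset.mem_toList, hL]⟩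
  · exfalso; rw [hL] at hlen; simp at hlen; omega

lemma baseB : ∫ x in (0:ℝ)..2, 3/4*(min x (2-x))^2 = 1/2 := by
  have hcont : Continuous fun x : ℝ => 3/4*(min x (2-x))^2 := by continuity
  have h1 : ∫ x in (0:ℝ)..1, 3/4*(min x (2-x))^2 = 1/4 := by
    have he : Set.EqOn (fun x : ℝ => 3/4*(min x (2-x))^2)
        (fun x : ℝ => 3/4*(x-0)^2 + 0) (Set.uIcc 0 1) := by
      intro x hx
      rw [Set.uIcc_of_le (by norm_num)] at hx
      simp only
      rw [min_eq_left (by linarith [hx.1, hx.2])]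
      ring
    rw [intervalIntegral.integral_congr he, integ_poly]
    norm_num
  have h2 : ∫ x in (1:ℝ)..2, 3/4*(min x (2-x))^2 = 1/4 := by
    have he : Set.EqOn (fun x : ℝ => 3/4*(min x (2-x))^2)
        (fun x : ℝ => 3/4*(x-2)^2 + 0) (Set.uIcc 1 2) := by
      intro x hx
      rw [Set.uIcc_of_le (by norm_num)] at hx
      simp only
      rw [min_eq_right (by linarith [hx.1, hx.2])]
      ring
    rw [intervalIntegral.integral_congr he, integ_poly]
    norm_num
  rw [← intervalIntegral.integral_add_adjacent_intervals
    (hcont.intervalIntegrable 0 1) (hcont.intervalIntegrable 1 2), h1, h2]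
  norm_num

lemma dist_lb (α : Finset (ℝ × ℝ)) (hsub : ↑α ⊆ S1 ∪ S2) (h1 : 1 ≤ α.card)
    (h4 : α.card ≤ 4) : 49/192 ≤ distortion α := by
  obtain ⟨p1, p2, p3, p4, hcov⟩ := cover α h1 h4
  have hp1 : p1 ∈ S1 ∪ S2 := hsub (by rw [hcov]; simp)
  have hp2 : p2 ∈ S1 ∪ S2 := hsub (by rw [hcov]; simp)
  have hp3 : p3 ∈ S1 ∪ S2 := hsub (by rw [hcov]; simp)
  have hp4 : p4 ∈ S1 ∪ S2 := hsub (by rw [hcov]; simp)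
  unfold distortion
  rw [hcov]
  simp only [sInf4]
  have hcont : Continuous fun x : ℝ => M4 ((x-p1.1)^2+p1.2^2) ((x-p2.1)^2+p2.2^2)
      ((x-p3.1)^2+p3.2^2) ((x-p4.1)^2+p4.2^2) :=
    contM4 (contq _ _) (contq _ _) (contq _ _) (contq _ _)
  have hGc : Continuous fun x : ℝ => M4 ((x-cpt p1)^2) ((x-cpt p2)^2) ((x-cpt p3)^2)
      ((x-cpt p4)^2) := contM4 (by continuity) (by continuity) (by continuity) (by continuity)
  have hBc : Continuous fun x : ℝ => 3/4*(min x (2-x))^2 := by continuity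
  have hmono : ∫ x in (0:ℝ)..2, (3/4*(min x (2-x))^2
        + (1/4) * M4 ((x-cpt p1)^2) ((x-cpt p2)^2) ((x-cpt p3)^2) ((x-cpt p4)^2))
      ≤ ∫ x in (0:ℝ)..2, M4 ((x-p1.1)^2+p1.2^2) ((x-p2.1)^2+p2.2^2)
        ((x-p3.1)^2+p3.2^2) ((x-p4.1)^2+p4.2^2) := by
    apply intervalIntegral.integral_mono_on (by norm_num)
      ((hBc.add (hGc.const_mul (1/4:ℝ))).intervalIntegrable _ _)
      (hcont.intervalIntegrable _ _)
    intro x hx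
    have hb1 := point_bound hp1 hx.1 hx.2
    have hb2 := point_bound hp2 hx.1 hx.2
    have hb3 := point_bound hp3 hx.1 hx.2
    have hb4 := point_bound hp4 hx.1 hx.2
    have g1 : M4 ((x-cpt p1)^2) ((x-cpt p2)^2) ((x-cpt p3)^2) ((x-cpt p4)^2)
        ≤ (x-cpt p1)^2 := le_trans (min_le_left _ _) (min_le_left _ _)
    have g2 : M4 ((x-cpt p1)^2) ((x-cpt p2)^2) ((x-cpt p3)^2) ((x-cpt p4)^2)
        ≤ (x-cpt p2)^2 := le_trans (min_le_left _ _) (min_le_right _ _)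
    have g3 : M4 ((x-cpt p1)^2) ((x-cpt p2)^2) ((x-cpt p3)^2) ((x-cpt p4)^2)
        ≤ (x-cpt p3)^2 := le_trans (min_le_right _ _) (min_le_left _ _)
    have g4 : M4 ((x-cpt p1)^2) ((x-cpt p2)^2) ((x-cpt p3)^2) ((x-cpt p4)^2)
        ≤ (x-cpt p4)^2 := le_trans (min_le_right _ _) (min_le_right _ _)
    simp only [M4, Pi.add_apply] at g1 g2 g3 g4 ⊢
    refine le_min (le_min ?_ ?_) (le_min ?_ ?_) <;> linarith
  have hadd : ∫ x in (0:ℝ)..2, (3/4*(min x (2-x))^2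
        + (1/4) * M4 ((x-cpt p1)^2) ((x-cpt p2)^2) ((x-cpt p3)^2) ((x-cpt p4)^2))
      = (∫ x in (0:ℝ)..2, 3/4*(min x (2-x))^2)
        + (1/4) * ∫ x in (0:ℝ)..2, M4 ((x-cpt p1)^2) ((x-cpt p2)^2) ((x-cpt p3)^2)
          ((x-cpt p4)^2) := by
    rw [intervalIntegral.integral_add (hBc.intervalIntegrable _ _)
      ((hGc.const_mul (1/4:ℝ)).intervalIntegrable _ _)]
    congr 1
    exact intervalIntegral.integral_const_mul _ _
  have hL := L1 (cpt p1) (cpt p2) (cpt p3) (cpt p4)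
  have hB := baseB
  linarith

lemma dist_val : distortion {((1/16 : ℝ), Real.sqrt 3 / 16), ((3/16 : ℝ), 3 * Real.sqrt 3 / 16),
    ((31/16 : ℝ), Real.sqrt 3 / 16), ((29/16 : ℝ), 3 * Real.sqrt 3 / 16)} = 49/192 := by
  have h3 : Real.sqrt 3 ^ 2 = 3 := Real.sq_sqrt (by norm_num)
  have e1 : (Real.sqrt 3 / 16)^2 = 3/256 := by rw [div_pow, h3]; norm_num
  have e2 : (3 * Real.sqrt 3 / 16)^2 = 27/256 := by rw [div_pow, mul_pow, h3]; norm_num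
  unfold distortion
  rw [Finset.coe_insert, Finset.coe_insert, Finset.coe_insert, Finset.coe_singleton]
  simp only [sInf4, e1, e2]
  have hc : Continuous fun x : ℝ => M4 ((x-1/16)^2+3/256) ((x-3/16)^2+27/256)
      ((x-31/16)^2+3/256) ((x-29/16)^2+27/256) :=
    contM4 (contq _ _) (contq _ _) (contq _ _) (contq _ _)
  have s1 : ∫ x in (0:ℝ)..(1/2), M4 ((x-1/16)^2+3/256) ((x-3/16)^2+27/256)
      ((x-31/16)^2+3/256) ((x-29/16)^2+27/256) = 13/384 := by
    have he : Set.EqOn (fun x : ℝ => M4 ((x-1/16)^2+3/256) ((x-3/16)^2+27/256)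
        ((x-31/16)^2+3/256) ((x-29/16)^2+27/256))
        (fun x : ℝ => 1*(x-1/16)^2 + 3/256) (Set.uIcc 0 (1/2)) := by
      intro x hx
      rw [Set.uIcc_of_le (by norm_num)] at hx
      obtain ⟨hx0, hx1⟩ := hx
      have l1 : (x-1/16)^2+3/256 ≤ (x-3/16)^2+27/256 := by nlinarith
      have l2 : (x-1/16)^2+3/256 ≤ (x-31/16)^2+3/256 := by nlinarith
      have l3 : (x-1/16)^2+3/256 ≤ (x-29/16)^2+27/256 := by nlinarith
      show M4 _ _ _ _ = _
      rw [M4, min_eq_left l1, min_eq_left (le_min l2 l3)]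
      ring
    rw [intervalIntegral.integral_congr he, integ_poly]
    norm_num
  have s2 : ∫ x in (1/2:ℝ)..1, M4 ((x-1/16)^2+3/256) ((x-3/16)^2+27/256)
      ((x-31/16)^2+3/256) ((x-29/16)^2+27/256) = 85/384 := by
    have he : Set.EqOn (fun x : ℝ => M4 ((x-1/16)^2+3/256) ((x-3/16)^2+27/256)
        ((x-31/16)^2+3/256) ((x-29/16)^2+27/256))
        (fun x : ℝ => 1*(x-3/16)^2 + 27/256) (Set.uIcc (1/2) 1) := by
      intro x hx
      rw [Set.uIcc_of_le (by norm_num)] at hx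
      obtain ⟨hx0, hx1⟩ := hx
      have l1 : (x-3/16)^2+27/256 ≤ (x-1/16)^2+3/256 := by nlinarith
      have l2 : (x-3/16)^2+27/256 ≤ (x-31/16)^2+3/256 := by nlinarith
      have l3 : (x-3/16)^2+27/256 ≤ (x-29/16)^2+27/256 := by nlinarith
      show M4 _ _ _ _ = _
      rw [M4, min_eq_right l1, min_eq_left (le_min l2 l3)]
      ring
    rw [intervalIntegral.integral_congr he, integ_poly]
    norm_num
  have s3 : ∫ x in (1:ℝ)..(3/2), M4 ((x-1/16)^2+3/256) ((x-3/16)^2+27/256)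
      ((x-31/16)^2+3/256) ((x-29/16)^2+27/256) = 85/384 := by
    have he : Set.EqOn (fun x : ℝ => M4 ((x-1/16)^2+3/256) ((x-3/16)^2+27/256)
        ((x-31/16)^2+3/256) ((x-29/16)^2+27/256))
        (fun x : ℝ => 1*(x-29/16)^2 + 27/256) (Set.uIcc 1 (3/2)) := by
      intro x hx
      rw [Set.uIcc_of_le (by norm_num)] at hx
      obtain ⟨hx0, hx1⟩ := hx
      have l1 : (x-29/16)^2+27/256 ≤ (x-1/16)^2+3/256 := by nlinarith
      have l2 : (x-29/16)^2+27/256 ≤ (x-3/16)^2+27/256 := by nlinarith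
      have l3 : (x-29/16)^2+27/256 ≤ (x-31/16)^2+3/256 := by nlinarith
      show M4 _ _ _ _ = _
      rw [M4, min_eq_right l3, min_eq_right (le_min l1 l2)]
      ring
    rw [intervalIntegral.integral_congr he, integ_poly]
    norm_num
  have s4 : ∫ x in (3/2:ℝ)..2, M4 ((x-1/16)^2+3/256) ((x-3/16)^2+27/256)
      ((x-31/16)^2+3/256) ((x-29/16)^2+27/256) = 13/384 := by
    have he : Set.EqOn (fun x : ℝ => M4 ((x-1/16)^2+3/256) ((x-3/16)^2+27/256)
        ((x-31/16)^2+3/256) ((x-29/16)^2+27/256))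
        (fun x : ℝ => 1*(x-31/16)^2 + 3/256) (Set.uIcc (3/2) 2) := by
      intro x hx
      rw [Set.uIcc_of_le (by norm_num)] at hx
      obtain ⟨hx0, hx1⟩ := hx
      have l1 : (x-31/16)^2+3/256 ≤ (x-1/16)^2+3/256 := by nlinarith
      have l2 : (x-31/16)^2+3/256 ≤ (x-3/16)^2+27/256 := by nlinarith
      have l3 : (x-31/16)^2+3/256 ≤ (x-29/16)^2+27/256 := by nlinarith
      show M4 _ _ _ _ = _
      rw [M4, min_eq_left l3, min_eq_right (le_min l1 l2)]
      ring
    rw [intervalIntegral.integral_congr he, integ_poly]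
    norm_num
  have e12 : (∫ x in (0:ℝ)..(1/2), M4 ((x-1/16)^2+3/256) ((x-3/16)^2+27/256)
        ((x-31/16)^2+3/256) ((x-29/16)^2+27/256))
      + ∫ x in (1/2:ℝ)..1, M4 ((x-1/16)^2+3/256) ((x-3/16)^2+27/256)
        ((x-31/16)^2+3/256) ((x-29/16)^2+27/256)
      = ∫ x in (0:ℝ)..1, M4 ((x-1/16)^2+3/256) ((x-3/16)^2+27/256)
        ((x-31/16)^2+3/256) ((x-29/16)^2+27/256) :=
    intervalIntegral.integral_add_adjacent_intervals (hc.intervalIntegrable _ _)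
      (hc.intervalIntegrable _ _)
  have e34 : (∫ x in (1:ℝ)..(3/2), M4 ((x-1/16)^2+3/256) ((x-3/16)^2+27/256)
        ((x-31/16)^2+3/256) ((x-29/16)^2+27/256))
      + ∫ x in (3/2:ℝ)..2, M4 ((x-1/16)^2+3/256) ((x-3/16)^2+27/256)
        ((x-31/16)^2+3/256) ((x-29/16)^2+27/256)
      = ∫ x in (1:ℝ)..2, M4 ((x-1/16)^2+3/256) ((x-3/16)^2+27/256)
        ((x-31/16)^2+3/256) ((x-29/16)^2+27/256) :=
    intervalIntegral.integral_add_adjacent_intervals (hc.intervalIntegrable _ _)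
      (hc.intervalIntegrable _ _)
  have efin : (∫ x in (0:ℝ)..1, M4 ((x-1/16)^2+3/256) ((x-3/16)^2+27/256)
        ((x-31/16)^2+3/256) ((x-29/16)^2+27/256))
      + ∫ x in (1:ℝ)..2, M4 ((x-1/16)^2+3/256) ((x-3/16)^2+27/256)
        ((x-31/16)^2+3/256) ((x-29/16)^2+27/256)
      = ∫ x in (0:ℝ)..2, M4 ((x-1/16)^2+3/256) ((x-3/16)^2+27/256)
        ((x-31/16)^2+3/256) ((x-29/16)^2+27/256) :=
    intervalIntegral.integral_add_adjacent_intervals (hc.intervalIntegrable _ _)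
      (hc.intervalIntegrable _ _)
  have : ∫ x in (0:ℝ)..2, M4 ((x-1/16)^2+3/256) ((x-3/16)^2+27/256)
      ((x-31/16)^2+3/256) ((x-29/16)^2+27/256) = 49/96 := by
    rw [← efin, ← e12, ← e34, s1, s2, s3, s4]; norm_num
  rw [this]
  norm_num

/-- The optimal set of four points and V₄ = 49/192. -/
theorem stmt8 :
    V 4 = 49/192 ∧
    distortion {((1/16 : ℝ), Real.sqrt 3 / 16), ((3/16 : ℝ), 3 * Real.sqrt 3 / 16),
      ((31/16 : ℝ), Real.sqrt 3 / 16), ((29/16 : ℝ), 3 * Real.sqrt 3 / 16)} = 49/192 := by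
  have hsub : ↑({((1/16 : ℝ), Real.sqrt 3 / 16), ((3/16 : ℝ), 3 * Real.sqrt 3 / 16),
      ((31/16 : ℝ), Real.sqrt 3 / 16), ((29/16 : ℝ), 3 * Real.sqrt 3 / 16)} : Finset (ℝ × ℝ))
      ⊆ S1 ∪ S2 := by
    intro p hp
    simp only [Finset.coe_insert, Finset.coe_singleton, Set.mem_insert_iff,
      Set.mem_singleton_iff] at hp
    rcases hp with rfl | rfl | rfl | rfl
    · left; exact ⟨1/16, by norm_num, by norm_num, by rw [Prod.mk.injEq]; constructor <;> [norm_num; ring]⟩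
    · left; exact ⟨3/16, by norm_num, by norm_num, by rw [Prod.mk.injEq]; constructor <;> [norm_num; ring]⟩
    · right; exact ⟨31/16, by norm_num, by norm_num, by rw [Prod.mk.injEq]; constructor <;> [norm_num; ring]⟩
    · right; exact ⟨29/16, by norm_num, by norm_num, by rw [Prod.mk.injEq]; constructor <;> [norm_num; ring]⟩
  have hc1 : 1 ≤ ({((1/16 : ℝ), Real.sqrt 3 / 16), ((3/16 : ℝ), 3 * Real.sqrt 3 / 16),
      ((31/16 : ℝ), Real.sqrt 3 / 16), ((29/16 : ℝ), 3 * Real.sqrt 3 / 16)} : Finset (ℝ × ℝ)).card := by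
    refine Finset.card_pos.2 ⟨_, Finset.mem_insert_self _ _⟩
  have hc4 : ({((1/16 : ℝ), Real.sqrt 3 / 16), ((3/16 : ℝ), 3 * Real.sqrt 3 / 16),
      ((31/16 : ℝ), Real.sqrt 3 / 16), ((29/16 : ℝ), 3 * Real.sqrt 3 / 16)} : Finset (ℝ × ℝ)).card ≤ 4 := by
    have h1 := Finset.card_insert_le ((1/16 : ℝ), Real.sqrt 3 / 16)
      ({((3/16 : ℝ), 3 * Real.sqrt 3 / 16), ((31/16 : ℝ), Real.sqrt 3 / 16),
        ((29/16 : ℝ), 3 * Real.sqrt 3 / 16)} : Finset (ℝ × ℝ))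
    have h2 := Finset.card_insert_le ((3/16 : ℝ), 3 * Real.sqrt 3 / 16)
      ({((31/16 : ℝ), Real.sqrt 3 / 16), ((29/16 : ℝ), 3 * Real.sqrt 3 / 16)} : Finset (ℝ × ℝ))
    have h3 := Finset.card_insert_le ((31/16 : ℝ), Real.sqrt 3 / 16)
      ({((29/16 : ℝ), 3 * Real.sqrt 3 / 16)} : Finset (ℝ × ℝ))
    have h4 : ({((29/16 : ℝ), 3 * Real.sqrt 3 / 16)} : Finset (ℝ × ℝ)).card = 1 :=
      Finset.card_singleton _
    omega
  have hmem : (49/192 : ℝ) ∈ {v | ∃ α : Finset (ℝ × ℝ), ↑α ⊆ S1 ∪ S2 ∧ 1 ≤ α.card ∧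
      α.card ≤ 4 ∧ v = distortion α} := ⟨_, hsub, hc1, hc4, dist_val.symm⟩
  have hlb : ∀ v ∈ {v | ∃ α : Finset (ℝ × ℝ), ↑α ⊆ S1 ∪ S2 ∧ 1 ≤ α.card ∧
      α.card ≤ 4 ∧ v = distortion α}, (49/192 : ℝ) ≤ v := by
    rintro v ⟨β, hs, h1, h4, rfl⟩
    exact dist_lb β hs h1 h4
  refine ⟨le_antisymm (csInf_le ⟨_, hlb⟩ hmem) (le_csInf ⟨_, hmem⟩ hlb), dist_val⟩

end
end

section
/- For n ≥ 3, if all n points lie on side OB at positions aᵢ = (2i-1)u/2, then the distortion error as a function of u equals -(4/3)n(2n²-3n+1)u³ + (1-2n)²u² - 2nu + u + 4/3, which is minimized at u = 1/(2n) with minimum value 1/(12n²) + 1. -/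
lemma int_eq (a b c d : ℝ) :
    (∫ x in a..b, ((x - c)^2 + d)) = ((b - c)^3 - (a - c)^3)/3 + d*(b - a) := by
  have h1 : (∫ x in a..b, (x - c)^2) = ((b - c)^3 - (a - c)^3)/3 := by
    rw [intervalIntegral.integral_comp_sub_right (fun x => x^2) c, integral_pow]
    ring
  rw [intervalIntegral.integral_add
      ((by fun_prop : Continuous fun x : ℝ => (x - c)^2).intervalIntegrable a b)
      (intervalIntegrable_const), h1, intervalIntegral.integral_const]
  simp [smul_eq_mul]; ring

lemma sum_cells (u : ℝ) (m : ℕ) :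
    (∑ i ∈ Finset.Icc 1 m, ∫ x in (4*((i:ℝ) - 1)*u)..(4*(i:ℝ)*u),
        ((x - (2*(i:ℝ) - 1)*u/2)^2 + 3*((2*(i:ℝ) - 1)*u/2)^2))
      = (16*(m:ℝ)^3 - 4*(m:ℝ) + 16*(m:ℝ)/3) * u^3 := by
  induction m with
  | zero => simp
  | succ m ih =>
      rw [Finset.sum_Icc_succ_top (by omega), ih, int_eq]
      push_cast
      ring

/-- With all n points on side OB at aᵢ = (2i-1)u/2, the distortion error as a function
of u equals -(4/3)n(2n²-3n+1)u³ + (1-2n)²u² - 2nu + u + 4/3, minimized at u = 1/(2n)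
with minimum value 1/(12n²) + 1. -/
theorem stmt9 (n : ℕ) (hn : 3 ≤ n) :
    let E : ℝ → ℝ := fun u =>
      (1/2) * ((∑ i ∈ Finset.Icc 1 (n - 1), ∫ x in (4*((i:ℝ) - 1)*u)..(4*(i:ℝ)*u),
          ((x - (2*(i:ℝ) - 1)*u/2)^2 + 3*((2*(i:ℝ) - 1)*u/2)^2)) +
        ∫ x in (4*((n:ℝ) - 1)*u)..(2:ℝ),
          ((x - (2*(n:ℝ) - 1)*u/2)^2 + 3*((2*(n:ℝ) - 1)*u/2)^2))
    (∀ u : ℝ, E u = -(4/3)*(n:ℝ)*(2*(n:ℝ)^2 - 3*(n:ℝ) + 1)*u^3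
        + (1 - 2*(n:ℝ))^2*u^2 - 2*(n:ℝ)*u + u + 4/3) ∧
    E (1/(2*(n:ℝ))) = 1/(12*(n:ℝ)^2) + 1 ∧
    (∀ u : ℝ, 0 < u → 4*((n:ℝ) - 1)*u ≤ 2 → 1/(12*(n:ℝ)^2) + 1 ≤ E u) := by
  intro E
  have hc : ((n - 1 : ℕ) : ℝ) = (n : ℝ) - 1 := by
    rw [Nat.cast_sub (by omega)]; norm_num
  have hN : (3:ℝ) ≤ (n:ℝ) := by exact_mod_cast hn
  have h1 : ∀ u : ℝ, E u = -(4/3)*(n:ℝ)*(2*(n:ℝ)^2 - 3*(n:ℝ) + 1)*u^3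
      + (1 - 2*(n:ℝ))^2*u^2 - 2*(n:ℝ)*u + u + 4/3 := by
    intro u
    show (1/2) * _ = _
    rw [sum_cells, int_eq, hc]
    ring
  refine ⟨h1, ?_, ?_⟩
  · rw [h1]
    have hn0 : (n:ℝ) ≠ 0 := by positivity
    field_simp
    ring
  · intro u hu hub
    rw [h1]
    have key : (-(4/3)*(n:ℝ)*(2*(n:ℝ)^2 - 3*(n:ℝ) + 1)*u^3
        + (1 - 2*(n:ℝ))^2*u^2 - 2*(n:ℝ)*u + u + 4/3) - (1/(12*(n:ℝ)^2) + 1)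
        = (1/3)*(2*(n:ℝ)-1)*(u*2*(n:ℝ)-1)^2*((2*(n:ℝ)+1) - 4*(n:ℝ)*((n:ℝ)-1)*u)
          / (4*(n:ℝ)^2) := by
      have hn0 : (n:ℝ) ≠ 0 := by positivity
      field_simp
      ring
    have hfac : 0 ≤ (1/3)*(2*(n:ℝ)-1)*(u*2*(n:ℝ)-1)^2*((2*(n:ℝ)+1) - 4*(n:ℝ)*((n:ℝ)-1)*u)
        / (4*(n:ℝ)^2) := by
      apply div_nonneg _ (by positivity)
      apply mul_nonneg (mul_nonneg (by nlinarith) (sq_nonneg _))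
      nlinarith
    linarith [key, hfac]
end

section
/- For n ≥ 2, any optimal set of n points for the uniform distribution on [0,2] with constraint S₁ ∪ S₂ contains at least one point from each of S₁ and S₂. -/
open scoped Classical

lemma sInf_eq_inf' (α : Finset (ℝ × ℝ)) (hne : α.Nonempty) (x : ℝ) :
    sInf ((fun p : ℝ × ℝ => (x - p.1)^2 + p.2^2) '' (α : Set (ℝ × ℝ)))
      = α.inf' hne (fun p => (x - p.1)^2 + p.2^2) := by
  rw [Finset.inf'_eq_csInf_image]

lemma cont_inf' (α : Finset (ℝ × ℝ)) (hne : α.Nonempty) :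
    Continuous (fun x : ℝ => α.inf' hne (fun p => (x - p.1)^2 + p.2^2)) := by
  exact Continuous.finset_inf'_apply hne (fun p _ => by fun_prop)

lemma sq3 : Real.sqrt 3 ^ 2 = 3 := Real.sq_sqrt (by norm_num)

lemma lb_S2 (α : Finset (ℝ × ℝ)) (hne : α.Nonempty) (hα : ↑α ⊆ S2) (x : ℝ) :
    (3/4) * (2 - x)^2 ≤ α.inf' hne (fun p => (x - p.1)^2 + p.2^2) := by
  rw [Finset.le_inf'_iff]
  intro p hp
  obtain ⟨a, ha1, ha2, rfl⟩ := hα hp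
  have h3 := sq3
  simp only
  nlinarith [sq_nonneg (4*a - x - 6), sq_nonneg (Real.sqrt 3)]

lemma lb_S1 (α : Finset (ℝ × ℝ)) (hne : α.Nonempty) (hα : ↑α ⊆ S1) (x : ℝ) :
    (3/4) * x^2 ≤ α.inf' hne (fun p => (x - p.1)^2 + p.2^2) := by
  rw [Finset.le_inf'_iff]
  intro p hp
  obtain ⟨a, ha1, ha2, rfl⟩ := hα hp
  have h3 := sq3
  simp only
  nlinarith [sq_nonneg (4*a - x)]

lemma distortion_lb_S2 (α : Finset (ℝ × ℝ)) (hne : α.Nonempty) (hα : ↑α ⊆ S2) :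
    1 ≤ distortion α := by
  have hc := cont_inf' α hne
  have hmono : (∫ x in (0:ℝ)..2, (3/4) * (2 - x)^2)
      ≤ ∫ x in (0:ℝ)..2, α.inf' hne (fun p => (x - p.1)^2 + p.2^2) := by
    apply intervalIntegral.integral_mono_on (by norm_num)
    · exact (by fun_prop : Continuous fun x : ℝ => (3/4) * (2 - x)^2).intervalIntegrable _ _
    · exact hc.intervalIntegrable _ _
    · intro x _; exact lb_S2 α hne hα x
  have hval : (∫ x in (0:ℝ)..2, (3/4) * (2 - x)^2) = 2 := by
    rw [intervalIntegral.integral_const_mul]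
    rw [intervalIntegral.integral_comp_sub_left (fun x : ℝ => x^2) 2]
    norm_num [integral_pow]
  unfold distortion
  have : (∫ x in (0:ℝ)..2, sInf ((fun p : ℝ × ℝ => (x - p.1)^2 + p.2^2) '' (α : Set (ℝ × ℝ))))
      = ∫ x in (0:ℝ)..2, α.inf' hne (fun p => (x - p.1)^2 + p.2^2) := by
    apply intervalIntegral.integral_congr
    intro x _; exact sInf_eq_inf' α hne x
  rw [this]
  linarith [hmono, hval.symm ▸ hmono]

lemma distortion_lb_S1 (α : Finset (ℝ × ℝ)) (hne : α.Nonempty) (hα : ↑α ⊆ S1) :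
    1 ≤ distortion α := by
  have hc := cont_inf' α hne
  have hmono : (∫ x in (0:ℝ)..2, (3/4) * x^2)
      ≤ ∫ x in (0:ℝ)..2, α.inf' hne (fun p => (x - p.1)^2 + p.2^2) := by
    apply intervalIntegral.integral_mono_on (by norm_num)
    · exact (by fun_prop : Continuous fun x : ℝ => (3/4) * x^2).intervalIntegrable _ _
    · exact hc.intervalIntegrable _ _
    · intro x _; exact lb_S1 α hne hα x
  have hval : (∫ x in (0:ℝ)..2, (3/4) * x^2) = 2 := by
    rw [intervalIntegral.integral_const_mul, integral_pow]
    norm_num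
  unfold distortion
  have : (∫ x in (0:ℝ)..2, sInf ((fun p : ℝ × ℝ => (x - p.1)^2 + p.2^2) '' (α : Set (ℝ × ℝ))))
      = ∫ x in (0:ℝ)..2, α.inf' hne (fun p => (x - p.1)^2 + p.2^2) := by
    apply intervalIntegral.integral_congr
    intro x _; exact sInf_eq_inf' α hne x
  rw [this]
  linarith

lemma distortion_pair : distortion ({((0:ℝ),(0:ℝ)), ((2:ℝ),(0:ℝ))} : Finset (ℝ × ℝ)) = 1/3 := by
  have himg : ∀ x : ℝ,
      sInf ((fun p : ℝ × ℝ => (x - p.1)^2 + p.2^2) ''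
        (({((0:ℝ),(0:ℝ)), ((2:ℝ),(0:ℝ))} : Finset (ℝ × ℝ)) : Set (ℝ × ℝ)))
        = min (x^2) ((x-2)^2) := by
    intro x
    have : (({((0:ℝ),(0:ℝ)), ((2:ℝ),(0:ℝ))} : Finset (ℝ × ℝ)) : Set (ℝ × ℝ))
        = {((0:ℝ),(0:ℝ)), ((2:ℝ),(0:ℝ))} := by simp
    rw [this, Set.image_insert_eq, Set.image_singleton]
    simp only
    rw [csInf_pair]
    norm_num
  unfold distortion
  rw [intervalIntegral.integral_congr (g := fun x => min (x^2) ((x-2)^2))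
    (fun x _ => himg x)]
  have hsplit : (∫ x in (0:ℝ)..2, min (x^2) ((x-2)^2))
      = (∫ x in (0:ℝ)..1, min (x^2) ((x-2)^2)) + ∫ x in (1:ℝ)..2, min (x^2) ((x-2)^2) := by
    rw [intervalIntegral.integral_add_adjacent_intervals] <;>
      exact ((continuous_pow 2).min (by fun_prop)).intervalIntegrable _ _
  have h1 : (∫ x in (0:ℝ)..1, min (x^2) ((x-2)^2)) = 1/3 := by
    rw [intervalIntegral.integral_congr (g := fun x : ℝ => x^2)]
    · rw [integral_pow]; norm_num
    · intro x hx
      rw [Set.uIcc_of_le (by norm_num)] at hx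
      have h0 : 0 ≤ x := hx.1
      have h1 : x ≤ 1 := hx.2
      simp only
      rw [min_eq_left]
      nlinarith
  have h2 : (∫ x in (1:ℝ)..2, min (x^2) ((x-2)^2)) = 1/3 := by
    rw [intervalIntegral.integral_congr (g := fun x : ℝ => (x-2)^2)]
    · have : (∫ x in (1:ℝ)..2, (x-2)^2) = ∫ x in (-1:ℝ)..0, x^2 := by
        rw [intervalIntegral.integral_comp_sub_right (fun x => x^2) 2]
        norm_num
      rw [this, integral_pow]
      norm_num
    · intro x hx
      rw [Set.uIcc_of_le (by norm_num)] at hx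
      have h0 : 1 ≤ x := hx.1
      have h1 : x ≤ 2 := hx.2
      simp only
      rw [min_eq_right]
      nlinarith
  rw [hsplit, h1, h2]; norm_num

lemma distortion_nonneg (α : Finset (ℝ × ℝ)) (hne : α.Nonempty) : 0 ≤ distortion α := by
  unfold distortion
  apply mul_nonneg (by norm_num)
  apply intervalIntegral.integral_nonneg (by norm_num)
  intro x _
  apply le_csInf
  · exact (hne.to_set.image _)
  · rintro b ⟨p, _, rfl⟩
    positivity

lemma V_le (n : ℕ) (hn : 2 ≤ n) : V n ≤ 1/3 := by
  have hbdd : BddBelow {v | ∃ α : Finset (ℝ × ℝ),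
      ↑α ⊆ S1 ∪ S2 ∧ 1 ≤ α.card ∧ α.card ≤ n ∧ v = distortion α} := by
    refine ⟨0, ?_⟩
    rintro v ⟨β, _, hc, _, rfl⟩
    exact distortion_nonneg β (Finset.card_pos.mp hc)
  apply csInf_le hbdd
  refine ⟨{((0:ℝ),(0:ℝ)), ((2:ℝ),(0:ℝ))}, ?_, ?_, ?_, distortion_pair.symm⟩
  · intro p hp
    simp only [Finset.coe_insert, Finset.coe_singleton, Set.mem_insert_iff,
      Set.mem_singleton_iff] at hp
    rcases hp with rfl | rfl
    · left; exact ⟨0, le_refl 0, by norm_num, by norm_num⟩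
    · right; exact ⟨2, by norm_num, le_refl 2, by norm_num⟩
  · have : ((0:ℝ),(0:ℝ)) ∉ ({((2:ℝ),(0:ℝ))} : Finset (ℝ × ℝ)) := by
      simp [Prod.ext_iff]
    rw [Finset.card_insert_of_notMem this, Finset.card_singleton]
    norm_num
  · have : ((0:ℝ),(0:ℝ)) ∉ ({((2:ℝ),(0:ℝ))} : Finset (ℝ × ℝ)) := by
      simp [Prod.ext_iff]
    rw [Finset.card_insert_of_notMem this, Finset.card_singleton]
    exact hn

/-- For n ≥ 2, any optimal set of n points contains points from both S1 and S2. -/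
theorem stmt11 (n : ℕ) (hn : 2 ≤ n) (α : Finset (ℝ × ℝ))
    (hS : ↑α ⊆ S1 ∪ S2) (h1 : 1 ≤ α.card) (h2 : α.card ≤ n)
    (hopt : distortion α = V n) :
    ((α : Set (ℝ × ℝ)) ∩ S1).Nonempty ∧ ((α : Set (ℝ × ℝ)) ∩ S2).Nonempty := by
  have hne : α.Nonempty := Finset.card_pos.mp h1
  have hV : V n ≤ 1/3 := V_le n hn
  constructor
  · by_contra h
    rw [Set.not_nonempty_iff_eq_empty] at h
    have hsub : ↑α ⊆ S2 := by
      intro p hp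
      rcases hS hp with h1' | h2'
      · exact (Set.eq_empty_iff_forall_notMem.mp h p ⟨hp, h1'⟩).elim
      · exact h2'
    have := distortion_lb_S2 α hne hsub
    linarith [hopt ▸ this]
  · by_contra h
    rw [Set.not_nonempty_iff_eq_empty] at h
    have hsub : ↑α ⊆ S1 := by
      intro p hp
      rcases hS hp with h1' | h2'
      · exact h1'
      · exact (Set.eq_empty_iff_forall_notMem.mp h p ⟨hp, h2'⟩).elim
    have := distortion_lb_S1 α hne hsub
    linarith [hopt ▸ this]
end

section
/- The limit as ℓ → ∞ of 1/( 24ℓ/√(156ℓ²+13) + 1/(-12ℓ²-1) + 25/13 ) equals 1/(4√(3/13) + 25/13), and this limit is strictly greater than 49/192. -/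
open Filter Topology

lemma sqrt156_pos : (0:ℝ) < Real.sqrt 156 := Real.sqrt_pos.mpr (by norm_num)

lemma key13 : Real.sqrt (3/13) * Real.sqrt 156 = 6 := by
  rw [← Real.sqrt_mul (by norm_num : (0:ℝ) ≤ 3/13)]
  rw [show (3/13*156 : ℝ) = 6^2 by norm_num]
  exact Real.sqrt_sq (by norm_num)

lemma limval : 4*Real.sqrt (3/13) = 24 / Real.sqrt 156 := by
  rw [eq_div_iff sqrt156_pos.ne']
  linear_combination 4 * key13

lemma sqrt_313_lt : Real.sqrt (3/13) < 1271/2548 := by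
  rw [Real.sqrt_lt' (by norm_num)]
  norm_num

lemma denom_pos : (0:ℝ) < 4*Real.sqrt (3/13) + 25/13 := by
  have := Real.sqrt_nonneg (3/13 : ℝ)
  nlinarith

/-- The limit as ℓ → ∞ of 1/(24ℓ/√(156ℓ²+13) + 1/(-12ℓ²-1) + 25/13) equals
1/(4√(3/13) + 25/13), which is strictly greater than 49/192 = V₄. -/
theorem stmt13 :
    Filter.Tendsto
      (fun ℓ : ℕ => 1/(24*(ℓ:ℝ)/Real.sqrt (156*(ℓ:ℝ)^2 + 13) + 1/(-12*(ℓ:ℝ)^2 - 1) + 25/13))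
      Filter.atTop (nhds (1/(4*Real.sqrt (3/13) + 25/13))) ∧
    (49/192 : ℝ) < 1/(4*Real.sqrt (3/13) + 25/13) := by
  constructor
  · -- the limit
    have hsq : Tendsto (fun ℓ:ℕ => (ℓ:ℝ)^2) atTop atTop :=
      (tendsto_pow_atTop two_ne_zero).comp tendsto_natCast_atTop_atTop
    have h0 : Tendsto (fun ℓ:ℕ => (13:ℝ)/(ℓ:ℝ)^2) atTop (nhds 0) :=
      Tendsto.div_atTop tendsto_const_nhds hsq
    have h1 : Tendsto (fun ℓ:ℕ => 24 / Real.sqrt (156 + 13/(ℓ:ℝ)^2)) atTop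
        (nhds (24 / Real.sqrt 156)) := by
      have h2 : Tendsto (fun ℓ:ℕ => Real.sqrt (156 + 13/(ℓ:ℝ)^2)) atTop
          (nhds (Real.sqrt 156)) := by
        have : Tendsto (fun ℓ:ℕ => 156 + 13/(ℓ:ℝ)^2) atTop (nhds 156) := by
          simpa using tendsto_const_nhds.add h0
        exact this.sqrt
      exact tendsto_const_nhds.div h2 sqrt156_pos.ne'
    have ha : Tendsto (fun ℓ:ℕ => 24*(ℓ:ℝ)/Real.sqrt (156*(ℓ:ℝ)^2 + 13)) atTop
        (nhds (24 / Real.sqrt 156)) := by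
      apply h1.congr'
      filter_upwards [eventually_ge_atTop 1] with ℓ hℓ
      have hp : (0:ℝ) < (ℓ:ℝ) := by exact_mod_cast Nat.lt_of_lt_of_le Nat.zero_lt_one hℓ
      have hin : (0:ℝ) < 156 + 13/(ℓ:ℝ)^2 := by positivity
      have hsplit : Real.sqrt (156*(ℓ:ℝ)^2 + 13) = (ℓ:ℝ) * Real.sqrt (156 + 13/(ℓ:ℝ)^2) := by
        rw [show (156*(ℓ:ℝ)^2 + 13) = (ℓ:ℝ)^2 * (156 + 13/(ℓ:ℝ)^2) by field_simp,
          Real.sqrt_mul (by positivity), Real.sqrt_sq hp.le]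
      rw [hsplit]
      have hs := Real.sqrt_pos.mpr hin
      field_simp
    have hb : Tendsto (fun ℓ:ℕ => 1/(-12*(ℓ:ℝ)^2 - 1)) atTop (nhds 0) := by
      have hpos : Tendsto (fun ℓ:ℕ => 12*(ℓ:ℝ)^2 + 1) atTop atTop :=
        tendsto_atTop_add_const_right _ 1 (hsq.const_mul_atTop (by norm_num))
      have hb0 : Tendsto (fun ℓ:ℕ => -(1/(12*(ℓ:ℝ)^2 + 1))) atTop (nhds 0) := by
        simpa using (Tendsto.div_atTop (tendsto_const_nhds (x:=(1:ℝ))) hpos).neg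
      apply hb0.congr
      intro ℓ
      rw [show -12*(ℓ:ℝ)^2 - 1 = -(12*(ℓ:ℝ)^2 + 1) by ring, div_neg]
    have hinner : Tendsto
        (fun ℓ:ℕ => 24*(ℓ:ℝ)/Real.sqrt (156*(ℓ:ℝ)^2 + 13) + 1/(-12*(ℓ:ℝ)^2 - 1) + 25/13)
        atTop (nhds (4*Real.sqrt (3/13) + 25/13)) := by
      rw [show (4*Real.sqrt (3/13) + 25/13 : ℝ) = 24/Real.sqrt 156 + 0 + 25/13 by
        rw [limval]; ring]
      exact (ha.add hb).add tendsto_const_nhds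
    exact tendsto_const_nhds.div hinner denom_pos.ne'
  · -- the inequality
    rw [lt_div_iff₀ denom_pos]
    nlinarith [sqrt_313_lt, Real.sqrt_nonneg (3/13 : ℝ)]
end
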